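/- arXiv:1803.01718 — 2 statements merged into one kernel-verified Lean document; each statement's English description precedes it below -/
import Mathlib

section
/- Let E and F be Banach spaces, 1 ≤ p < ∞ and 1 ≤ q ≤ r < ∞, and T : E → F a bounded linear operator. Then (T(x_j))_{j=1}^∞ is absolutely r-summable in F for every mid (q,p)-summable sequence (x_j)_{j=1}^∞ in E if and only if there is a constant A > 0 such that (∑_{j=1}^k ‖T(x_j)‖^r)^{1/r} ≤ A ‖(x_1,…,x_k,0,0,…)‖_{q,p} for every k ∈ ℕ and all x_1,…,x_k ∈ E. -/
open NormedSpace MeasureTheory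

noncomputable section

/-- A sequence `x` in `E` is weakly `p`-summable: `∑_j |φ(x_j)|^p < ∞` for all `φ ∈ E*`. -/
def WeaklySummable (𝕜 : Type*) [RCLike 𝕜] {E : Type*} [NormedAddCommGroup E]
    [NormedSpace 𝕜 E] (p : ℝ) (x : ℕ → E) : Prop :=
  ∀ φ : StrongDual 𝕜 E, Summable fun j => ‖φ (x j)‖ ^ p

/-- The weak `p`-norm of a sequence: `sup_{φ ∈ B_{E*}} (∑_j |φ(x_j)|^p)^{1/p}`. -/
def weakNorm (𝕜 : Type*) [RCLike 𝕜] {E : Type*} [NormedAddCommGroup E]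
    [NormedSpace 𝕜 E] (p : ℝ) (x : ℕ → E) : ℝ :=
  ⨆ φ : {φ : StrongDual 𝕜 E // ‖φ‖ ≤ 1}, (∑' j, ‖φ.1 (x j)‖ ^ p) ^ (1 / p)

/-- A sequence `x` in `E` is mid `(q,p)`-summable:
`∑_j (∑_n |x_n^*(x_j)|^p)^{q/p} < ∞` for every weakly `p`-summable sequence `(x_n^*)` in `E*`. -/
def MidSummable (𝕜 : Type*) [RCLike 𝕜] {E : Type*} [NormedAddCommGroup E]
    [NormedSpace 𝕜 E] (q p : ℝ) (x : ℕ → E) : Prop :=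
  ∀ xs : ℕ → StrongDual 𝕜 E, WeaklySummable 𝕜 p xs →
    Summable fun j => (∑' n, ‖xs n (x j)‖ ^ p) ^ (q / p)

/-- The mid `(q,p)`-norm:
`sup over (x_n^*) in the closed unit ball of ℓ_p^w(E*)` of
`(∑_j (∑_n |x_n^*(x_j)|^p)^{q/p})^{1/q}`. -/
def midNorm (𝕜 : Type*) [RCLike 𝕜] {E : Type*} [NormedAddCommGroup E]
    [NormedSpace 𝕜 E] (q p : ℝ) (x : ℕ → E) : ℝ :=
  ⨆ xs : {xs : ℕ → StrongDual 𝕜 E // WeaklySummable 𝕜 p xs ∧ weakNorm 𝕜 p xs ≤ 1},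
    (∑' j, (∑' n, ‖xs.1 n (x j)‖ ^ p) ^ (q / p)) ^ (1 / q)

/-- `u : X → Y` is absolutely `p`-summing: there is `C > 0` with
`(∑_{j=1}^k ‖u(x_j)‖^p)^{1/p} ≤ C sup_{φ ∈ B_{X*}} (∑_{j=1}^k |φ(x_j)|^p)^{1/p}`
for all finite families. -/
def AbsolutelySumming (𝕜 : Type*) [RCLike 𝕜] {X Y : Type*} [NormedAddCommGroup X]
    [NormedSpace 𝕜 X] [NormedAddCommGroup Y] [NormedSpace 𝕜 Y] (p : ℝ)
    (u : X →L[𝕜] Y) : Prop :=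
  ∃ C > 0, ∀ (k : ℕ) (z : Fin k → X),
    (∑ j, ‖u (z j)‖ ^ p) ^ (1 / p) ≤
      C * ⨆ φ : {φ : StrongDual 𝕜 X // ‖φ‖ ≤ 1}, (∑ j, ‖φ.1 (z j)‖ ^ p) ^ (1 / p)

/-- The `p`-summing norm `π_p(u)`: the least admissible constant. -/
def piNorm (𝕜 : Type*) [RCLike 𝕜] {X Y : Type*} [NormedAddCommGroup X]
    [NormedSpace 𝕜 X] [NormedAddCommGroup Y] [NormedSpace 𝕜 Y] (p : ℝ)
    (u : X →L[𝕜] Y) : ℝ :=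
  sInf {C : ℝ | 0 < C ∧ ∀ (k : ℕ) (z : Fin k → X),
    (∑ j, ‖u (z j)‖ ^ p) ^ (1 / p) ≤
      C * ⨆ φ : {φ : StrongDual 𝕜 X // ‖φ‖ ≤ 1}, (∑ j, ‖φ.1 (z j)‖ ^ p) ^ (1 / p)}


section AuxLemmas
open Filter Topology Function

lemma uniform_weak_bound {𝕜 X : Type*} [RCLike 𝕜] [NormedAddCommGroup X] [NormedSpace 𝕜 X]
    {p : ℝ} (hp : 1 ≤ p) (xs : ℕ → X)
    (h : ∀ Φ : StrongDual 𝕜 X, Summable fun n => ‖Φ (xs n)‖ ^ p) :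
    ∃ C : ℝ, 0 ≤ C ∧ ∀ Φ : StrongDual 𝕜 X, ∑' n, ‖Φ (xs n)‖ ^ p ≤ C * ‖Φ‖ ^ p := by
  have hp0 : (0:ℝ) < p := lt_of_lt_of_le one_pos hp
  set pe : ENNReal := ENNReal.ofReal p with hpe
  have hpet : pe.toReal = p := ENNReal.toReal_ofReal hp0.le
  haveI : Fact (1 ≤ pe) := ⟨by
    rw [hpe, ← ENNReal.ofReal_one]
    exact ENNReal.ofReal_le_ofReal hp⟩
  have hpe0 : pe ≠ 0 := by
    simp [hpe, ENNReal.ofReal_eq_zero, not_le, hp0]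
  have hmem : ∀ Φ : StrongDual 𝕜 X, Memℓp (fun n => Φ (xs n)) pe := fun Φ =>
    memℓp_gen (by rw [hpet]; exact h Φ)
  let L : StrongDual 𝕜 X →ₗ[𝕜] lp (fun _ : ℕ => 𝕜) pe :=
    { toFun := fun Φ => ⟨fun n => Φ (xs n), hmem Φ⟩
      map_add' := by intro a b; ext n; simp [lp.coeFn_add]; rfl
      map_smul' := by intro c a; ext n; simp [lp.coeFn_smul] }
  have hLapp : ∀ (Φ : StrongDual 𝕜 X) (n : ℕ), (L Φ : ∀ _ : ℕ, 𝕜) n = Φ (xs n) := fun _ _ => rfl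
  have hcont : Continuous L := by
    apply LinearMap.continuous_of_seq_closed_graph
    intro u Φ y hu hy
    ext n
    have h1 : Tendsto (fun k => (L (u k) : ∀ _ : ℕ, 𝕜) n) atTop (𝓝 ((y : ∀ _ : ℕ, 𝕜) n)) := by
      rw [tendsto_iff_norm_sub_tendsto_zero]
      have hb : ∀ k, ‖(L (u k) : ∀ _ : ℕ, 𝕜) n - (y : ∀ _ : ℕ, 𝕜) n‖ ≤ ‖L (u k) - y‖ := by
        intro k
        have := lp.norm_apply_le_norm hpe0 (L (u k) - y) n
        simpa [lp.coeFn_sub] using this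
      have h0 : Tendsto (fun k => ‖L (u k) - y‖) atTop (𝓝 0) := by
        rw [← tendsto_iff_norm_sub_tendsto_zero]
        exact hy
      exact squeeze_zero (fun k => norm_nonneg _) hb h0
    have h2 : Tendsto (fun k => (u k) (xs n)) atTop (𝓝 (Φ (xs n))) := by
      exact ((ContinuousLinearMap.apply 𝕜 𝕜 (xs n)).continuous.tendsto Φ).comp hu
    have : (fun k => (L (u k) : ∀ _ : ℕ, 𝕜) n) = fun k => (u k) (xs n) := rfl
    rw [this] at h1
    rw [hLapp]
    exact tendsto_nhds_unique h1 h2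
  obtain ⟨C, hC0, hC⟩ : ∃ C : ℝ, 0 ≤ C ∧ ∀ Φ : StrongDual 𝕜 X, ‖L Φ‖ ≤ C * ‖Φ‖ := by
    obtain ⟨C, hC0, hC⟩ := SemilinearMapClass.bound_of_continuous L hcont
    exact ⟨C, hC0.le, hC⟩
  refine ⟨C ^ p, Real.rpow_nonneg hC0 p, fun Φ => ?_⟩
  have := lp.norm_rpow_eq_tsum (by rw [hpet]; exact hp0) (L Φ)
  rw [hpet] at this
  calc ∑' n, ‖Φ (xs n)‖ ^ p = ‖L Φ‖ ^ p := by rw [this]; rfl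
    _ ≤ (C * ‖Φ‖) ^ p := Real.rpow_le_rpow (norm_nonneg _) (hC Φ) hp0.le
    _ = C ^ p * ‖Φ‖ ^ p := Real.mul_rpow hC0 (norm_nonneg _)


lemma weak_tsum_le {𝕜 X : Type*} [RCLike 𝕜] [NormedAddCommGroup X] [NormedSpace 𝕜 X] {p : ℝ} (hp : 1 ≤ p) {xs : ℕ → X} (hxs : WeaklySummable 𝕜 p xs)
    (hn : weakNorm 𝕜 p xs ≤ 1) (Φ : StrongDual 𝕜 X) : ∑' n, ‖Φ (xs n)‖ ^ p ≤ ‖Φ‖ ^ p := by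
  have hp0 : (0:ℝ) < p := lt_of_lt_of_le one_pos hp
  obtain ⟨C, hC0, hC⟩ := uniform_weak_bound hp xs hxs
  -- bddAbove of the range
  have hbdd : BddAbove (Set.range fun φ : {φ : StrongDual 𝕜 X // ‖φ‖ ≤ 1} =>
      (∑' j, ‖φ.1 (xs j)‖ ^ p) ^ (1 / p)) := by
    refine ⟨C ^ (1/p), ?_⟩
    rintro _ ⟨φ, rfl⟩
    apply Real.rpow_le_rpow (tsum_nonneg fun n => Real.rpow_nonneg (norm_nonneg _) p)
    · calc ∑' j, ‖φ.1 (xs j)‖ ^ p ≤ C * ‖φ.1‖ ^ p := hC φ.1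
        _ ≤ C * 1 := by
            apply mul_le_mul_of_nonneg_left _ hC0
            exact Real.rpow_le_one (norm_nonneg _) φ.2 hp0.le
        _ = C := mul_one C
    · positivity
  -- base case: unit ball
  have hunit : ∀ Φ : StrongDual 𝕜 X, ‖Φ‖ ≤ 1 → ∑' n, ‖Φ (xs n)‖ ^ p ≤ 1 := by
    intro Φ hΦ
    have h1 : (∑' n, ‖Φ (xs n)‖ ^ p) ^ (1/p) ≤ weakNorm 𝕜 p xs := by
      exact le_ciSup hbdd (⟨Φ, hΦ⟩ : {φ : StrongDual 𝕜 X // ‖φ‖ ≤ 1})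
    have h2 : (∑' n, ‖Φ (xs n)‖ ^ p) ^ (1/p) ≤ 1 := h1.trans hn
    have := Real.rpow_le_rpow (Real.rpow_nonneg
      (tsum_nonneg fun n => Real.rpow_nonneg (norm_nonneg _) p) _) h2 hp0.le
    rwa [one_div, Real.rpow_inv_rpow
      (tsum_nonneg fun n => Real.rpow_nonneg (norm_nonneg _) p) hp0.ne', Real.one_rpow] at this
  by_cases hΦ0 : Φ = 0
  · subst hΦ0
    simp [Real.zero_rpow hp0.ne', tsum_zero]
  · have hnorm : (0:ℝ) < ‖Φ‖ := norm_pos_iff.mpr hΦ0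
    set c : ℝ := ‖Φ‖⁻¹ with hc
    have hcpos : 0 < c := inv_pos.mpr hnorm
    set Ψ : StrongDual 𝕜 X := (c : 𝕜) • Φ with hΨ
    have hΨnorm : ‖Ψ‖ ≤ 1 := by
      rw [hΨ, norm_smul, RCLike.norm_ofReal, abs_of_pos hcpos, hc]
      rw [inv_mul_cancel₀ hnorm.ne']
    have key := hunit Ψ hΨnorm
    have happ : ∀ n, ‖Ψ (xs n)‖ ^ p = c ^ p * ‖Φ (xs n)‖ ^ p := by
      intro n
      rw [hΨ]
      simp only [ContinuousLinearMap.smul_apply, norm_smul, RCLike.norm_ofReal,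
        abs_of_pos hcpos]
      rw [Real.mul_rpow hcpos.le (norm_nonneg _)]
    rw [tsum_congr happ, tsum_mul_left] at key
    have hcp : (0:ℝ) < c ^ p := Real.rpow_pos_of_pos hcpos p
    rw [← le_div_iff₀' hcp] at key
    calc ∑' n, ‖Φ (xs n)‖ ^ p ≤ 1 / c ^ p := key
      _ = ‖Φ‖ ^ p := by
          rw [hc, Real.inv_rpow (norm_nonneg _), one_div, inv_inv]

lemma mid_tsum_le {𝕜 E : Type*} [RCLike 𝕜] [NormedAddCommGroup E] [NormedSpace 𝕜 E] {p : ℝ} (hp : 1 ≤ p) {xs : ℕ → StrongDual 𝕜 E} (hxs : WeaklySummable 𝕜 p xs)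
    (hn : weakNorm 𝕜 p xs ≤ 1) (y : E) : ∑' n, ‖xs n y‖ ^ p ≤ ‖y‖ ^ p := by
  have hp0 : (0:ℝ) < p := lt_of_lt_of_le one_pos hp
  have h1 := weak_tsum_le hp hxs hn (inclusionInDoubleDual 𝕜 E y)
  simp only [dual_def] at h1
  exact h1.trans (Real.rpow_le_rpow (norm_nonneg _) (double_dual_bound 𝕜 E y) hp0.le)

lemma inner_summable {𝕜 E : Type*} [RCLike 𝕜] [NormedAddCommGroup E] [NormedSpace 𝕜 E] {p : ℝ} {xs : ℕ → StrongDual 𝕜 E} (hxs : WeaklySummable 𝕜 p xs) (y : E) :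
    Summable fun n => ‖xs n y‖ ^ p := by
  have := hxs (inclusionInDoubleDual 𝕜 E y)
  simpa only [dual_def] using this

lemma weaklySummable_zero {𝕜 E : Type*} [RCLike 𝕜] [NormedAddCommGroup E] [NormedSpace 𝕜 E] {p : ℝ} (hp0 : p ≠ 0) :
    WeaklySummable 𝕜 p (fun _ : ℕ => (0 : StrongDual 𝕜 E)) := by
  intro Φ
  simpa [Real.zero_rpow hp0] using summable_zero

lemma weakNorm_zero_le_one {𝕜 E : Type*} [RCLike 𝕜] [NormedAddCommGroup E] [NormedSpace 𝕜 E] {p : ℝ} (hp0 : p ≠ 0) :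
    weakNorm 𝕜 p (fun _ : ℕ => (0 : StrongDual 𝕜 E)) ≤ 1 := by
  have hne : Nonempty {φ : StrongDual 𝕜 (StrongDual 𝕜 E) // ‖φ‖ ≤ 1} := ⟨⟨0, by simp [ContinuousLinearMap.opNorm_zero]⟩⟩
  refine ciSup_le fun φ => ?_
  simp [Real.zero_rpow hp0, one_div, Real.zero_rpow (inv_ne_zero hp0)]

/-- nonemptiness of the index type in `midNorm` -/
lemma adm_nonempty {𝕜 E : Type*} [RCLike 𝕜] [NormedAddCommGroup E] [NormedSpace 𝕜 E] {p : ℝ} (hp0 : p ≠ 0) :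
    Nonempty {xs : ℕ → StrongDual 𝕜 E // WeaklySummable 𝕜 p xs ∧ weakNorm 𝕜 p xs ≤ 1} :=
  ⟨⟨fun _ => 0, weaklySummable_zero hp0, weakNorm_zero_le_one hp0⟩⟩

lemma mid_term_zero {𝕜 E : Type*} [RCLike 𝕜] [NormedAddCommGroup E] [NormedSpace 𝕜 E] {p q : ℝ} (hp0 : 0 < p) (hq0 : 0 < q) (xs : ℕ → StrongDual 𝕜 E) :
    (∑' n, ‖xs n (0 : E)‖ ^ p) ^ (q / p) = 0 := by
  have : ∀ n, ‖xs n (0 : E)‖ ^ p = 0 := by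
    intro n; rw [map_zero, norm_zero, Real.zero_rpow hp0.ne']
  rw [tsum_congr this, tsum_zero, Real.zero_rpow (by positivity : q / p ≠ 0)]

lemma mid_term_nonneg {𝕜 E : Type*} [RCLike 𝕜] [NormedAddCommGroup E] [NormedSpace 𝕜 E] {p q : ℝ} (xs : ℕ → StrongDual 𝕜 E) (y : E) :
    0 ≤ (∑' n, ‖xs n y‖ ^ p) ^ (q / p) :=
  Real.rpow_nonneg (tsum_nonneg fun n => Real.rpow_nonneg (norm_nonneg _) p) _

lemma midNorm_nonneg {𝕜 E : Type*} [RCLike 𝕜] [NormedAddCommGroup E] [NormedSpace 𝕜 E] {p q : ℝ} (x : ℕ → E) : 0 ≤ midNorm 𝕜 q p x := by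
  exact Real.iSup_nonneg fun xs => Real.rpow_nonneg
    (tsum_nonneg fun j => mid_term_nonneg _ _) _

/-- For a finitely supported sequence, the mid sum against an admissible `xs`
is a finite sum bounded by `∑ ‖x j‖^q`. -/
lemma mid_sum_le_of_adm {𝕜 E : Type*} [RCLike 𝕜] [NormedAddCommGroup E] [NormedSpace 𝕜 E] {p q : ℝ} (hp : 1 ≤ p) (hq : 1 ≤ q) {x : ℕ → E} {k : ℕ}
    (hxk : ∀ j, k ≤ j → x j = 0) {xs : ℕ → StrongDual 𝕜 E} (h1 : WeaklySummable 𝕜 p xs)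
    (h2 : weakNorm 𝕜 p xs ≤ 1) :
    (∑' j, (∑' n, ‖xs n (x j)‖ ^ p) ^ (q / p))
      = ∑ j ∈ Finset.range k, (∑' n, ‖xs n (x j)‖ ^ p) ^ (q / p) ∧
    ∑ j ∈ Finset.range k, (∑' n, ‖xs n (x j)‖ ^ p) ^ (q / p)
      ≤ ∑ j ∈ Finset.range k, ‖x j‖ ^ q := by
  have hp0 : (0:ℝ) < p := lt_of_lt_of_le one_pos hp
  have hq0 : (0:ℝ) < q := lt_of_lt_of_le one_pos hq
  constructor
  · refine tsum_eq_sum fun j hj => ?_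
    rw [hxk j (by simpa using hj)]
    exact mid_term_zero hp0 hq0 xs
  · refine Finset.sum_le_sum fun j _ => ?_
    calc (∑' n, ‖xs n (x j)‖ ^ p) ^ (q / p)
        ≤ (‖x j‖ ^ p) ^ (q / p) := by
          apply Real.rpow_le_rpow (tsum_nonneg fun n => Real.rpow_nonneg (norm_nonneg _) p)
            (mid_tsum_le hp h1 h2 (x j)) (by positivity)
      _ = ‖x j‖ ^ q := by
          rw [← Real.rpow_mul (norm_nonneg _), mul_div_cancel₀ q hp0.ne']

lemma midNorm_bddAbove {𝕜 E : Type*} [RCLike 𝕜] [NormedAddCommGroup E] [NormedSpace 𝕜 E] {p q : ℝ} (hp : 1 ≤ p) (hq : 1 ≤ q) {x : ℕ → E} {k : ℕ}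
    (hxk : ∀ j, k ≤ j → x j = 0) :
    BddAbove (Set.range fun xs : {xs : ℕ → StrongDual 𝕜 E // WeaklySummable 𝕜 p xs ∧
      weakNorm 𝕜 p xs ≤ 1} =>
      (∑' j, (∑' n, ‖xs.1 n (x j)‖ ^ p) ^ (q / p)) ^ (1 / q)) := by
  refine ⟨(∑ j ∈ Finset.range k, ‖x j‖ ^ q) ^ (1/q), ?_⟩
  rintro _ ⟨xs, rfl⟩
  obtain ⟨heq, hle⟩ := mid_sum_le_of_adm hp hq hxk xs.2.1 xs.2.2
  dsimp only
  rw [heq]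
  exact Real.rpow_le_rpow (Finset.sum_nonneg fun j _ => mid_term_nonneg _ _)
    hle (by positivity)

/-- MN: finite mid sums against admissible sequences are at most `midNorm ^ q`. -/
lemma mid_sum_le_midNorm_pow {𝕜 E : Type*} [RCLike 𝕜] [NormedAddCommGroup E] [NormedSpace 𝕜 E] {p q : ℝ} (hp : 1 ≤ p) (hq : 1 ≤ q) {x : ℕ → E} {k : ℕ}
    (hxk : ∀ j, k ≤ j → x j = 0) {xs : ℕ → StrongDual 𝕜 E} (h1 : WeaklySummable 𝕜 p xs)
    (h2 : weakNorm 𝕜 p xs ≤ 1) :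
    ∑ j ∈ Finset.range k, (∑' n, ‖xs n (x j)‖ ^ p) ^ (q / p)
      ≤ (midNorm 𝕜 q p x) ^ q := by
  have hq0 : (0:ℝ) < q := lt_of_lt_of_le one_pos hq
  obtain ⟨heq, _⟩ := mid_sum_le_of_adm hp hq hxk h1 h2
  have hS0 : 0 ≤ ∑ j ∈ Finset.range k, (∑' n, ‖xs n (x j)‖ ^ p) ^ (q / p) :=
    Finset.sum_nonneg fun j _ => mid_term_nonneg _ _
  have hval : (∑ j ∈ Finset.range k, (∑' n, ‖xs n (x j)‖ ^ p) ^ (q / p)) ^ (1/q)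
      ≤ midNorm 𝕜 q p x := by
    rw [← heq]
    exact le_ciSup (midNorm_bddAbove hp hq hxk)
      (⟨xs, h1, h2⟩ : {xs : ℕ → StrongDual 𝕜 E // WeaklySummable 𝕜 p xs ∧ weakNorm 𝕜 p xs ≤ 1})
  have := Real.rpow_le_rpow (Real.rpow_nonneg hS0 _) hval hq0.le
  rwa [one_div, Real.rpow_inv_rpow hS0 hq0.ne'] at this

/-- MW: witnesses for large midNorm. -/
lemma exists_adm_of_midNorm_gt {𝕜 E : Type*} [RCLike 𝕜] [NormedAddCommGroup E] [NormedSpace 𝕜 E] {p q : ℝ} (hp : 1 ≤ p) (hq : 1 ≤ q) {x : ℕ → E} {k : ℕ}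
    (hxk : ∀ j, k ≤ j → x j = 0) {t : ℝ} (ht : 0 ≤ t)
    (hgt : t < midNorm 𝕜 q p x) :
    ∃ xs : ℕ → StrongDual 𝕜 E, WeaklySummable 𝕜 p xs ∧ weakNorm 𝕜 p xs ≤ 1 ∧
      t ^ q < ∑ j ∈ Finset.range k, (∑' n, ‖xs n (x j)‖ ^ p) ^ (q / p) := by
  have hp0 : (0:ℝ) < p := lt_of_lt_of_le one_pos hp
  have hq0 : (0:ℝ) < q := lt_of_lt_of_le one_pos hq
  by_contra hcon
  push_neg at hcon
  have : midNorm 𝕜 q p x ≤ t := by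
    haveI := adm_nonempty (E := E) (𝕜 := 𝕜) hp0.ne'
    refine ciSup_le fun xs => ?_
    obtain ⟨heq, _⟩ := mid_sum_le_of_adm hp hq hxk xs.2.1 xs.2.2
    rw [heq]
    have hle := hcon xs.1 xs.2.1 xs.2.2
    calc (∑ j ∈ Finset.range k, (∑' n, ‖xs.1 n (x j)‖ ^ p) ^ (q / p)) ^ (1/q)
        ≤ (t ^ q) ^ (1/q) := Real.rpow_le_rpow
          (Finset.sum_nonneg fun j _ => mid_term_nonneg _ _) hle (by positivity)
      _ = t := by rw [one_div, Real.rpow_rpow_inv ht hq0.ne']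
  exact absurd hgt (not_lt.mpr this)



end AuxLemmas

section Main
open Filter Topology Function

variable {𝕜 E F : Type*}

lemma rev_dir [RCLike 𝕜] [NormedAddCommGroup E] [NormedSpace 𝕜 E]
    [NormedAddCommGroup F] [NormedSpace 𝕜 F]
    (p q r : ℝ) (hp : 1 ≤ p) (hq : 1 ≤ q) (hr : 1 ≤ r) (T : E →L[𝕜] F)
    (A : ℝ) (hA0 : 0 < A)
    (hA : ∀ (k : ℕ) (x : Fin k → E),
        (∑ j, ‖T (x j)‖ ^ r) ^ (1 / r) ≤
          A * midNorm 𝕜 q p fun j => if h : j < k then x ⟨j, h⟩ else 0)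
    (x : ℕ → E) (hx : MidSummable 𝕜 q p x) : Summable fun j => ‖T (x j)‖ ^ r := by
  have hp0 : (0:ℝ) < p := lt_of_lt_of_le one_pos hp
  have hq0 : (0:ℝ) < q := lt_of_lt_of_le one_pos hq
  have hr0 : (0:ℝ) < r := lt_of_lt_of_le one_pos hr
  by_contra hns
  have hnn : ∀ j, 0 ≤ ‖T (x j)‖ ^ r := fun j => Real.rpow_nonneg (norm_nonneg _) r
  have htend := (not_summable_iff_tendsto_nat_atTop_of_nonneg hnn).mp hns
  have hex : ∀ i : ℕ, ∃ k, (A * 4 ^ i) ^ r < ∑ j ∈ Finset.range k, ‖T (x j)‖ ^ r :=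
    fun i => (htend.eventually_gt_atTop _).exists
  choose k hk using hex
  -- the truncations
  set trunc : ℕ → ℕ → E := fun i j => if h : j < k i then x j else 0 with htrunc
  have htrunc0 : ∀ i j, k i ≤ j → trunc i j = 0 := fun i j hj => dif_neg (not_lt.mpr hj)
  have hM : ∀ i, (4:ℝ) ^ i < midNorm 𝕜 q p (trunc i) := by
    intro i
    have h1 := hA (k i) (fun j => x j)
    have h2 : (fun j => if h : j < k i then (fun j' : Fin (k i) => x j'.1) ⟨j, h⟩ else 0)
        = trunc i := rfl
    rw [h2] at h1
    have h3 : (∑ j : Fin (k i), ‖T (x j.1)‖ ^ r) = ∑ j ∈ Finset.range (k i), ‖T (x j)‖ ^ r :=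
      Fin.sum_univ_eq_sum_range (fun j => ‖T (x j)‖ ^ r) (k i)
    rw [h3] at h1
    have h4 : A * 4 ^ i < (∑ j ∈ Finset.range (k i), ‖T (x j)‖ ^ r) ^ (1/r) := by
      rw [one_div]
      have := Real.rpow_lt_rpow (by positivity) (hk i) (by positivity : (0:ℝ) < r⁻¹)
      rwa [← one_div, one_div, Real.rpow_rpow_inv (by positivity) hr0.ne'] at this
    have h5 : A * 4 ^ i < A * midNorm 𝕜 q p (trunc i) := lt_of_lt_of_le h4 h1
    exact lt_of_mul_lt_mul_left h5 hA0.le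
  have hwit : ∀ i, ∃ xs : ℕ → StrongDual 𝕜 E, WeaklySummable 𝕜 p xs ∧ weakNorm 𝕜 p xs ≤ 1 ∧
      ((4:ℝ) ^ i) ^ q < ∑ j ∈ Finset.range (k i), (∑' n, ‖xs n (trunc i j)‖ ^ p) ^ (q / p) :=
    fun i => exists_adm_of_midNorm_gt hp hq (htrunc0 i) (by positivity) (hM i)
  choose xs hxs1 hxs2 hxs3 using hwit
  -- rewrite trunc back to x inside the sums
  have hxs3' : ∀ i, ((4:ℝ) ^ i) ^ q <
      ∑ j ∈ Finset.range (k i), (∑' n, ‖xs i n (x j)‖ ^ p) ^ (q / p) := by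
    intro i
    refine lt_of_lt_of_le (hxs3 i) (le_of_eq (Finset.sum_congr rfl fun j hj => ?_))
    rw [htrunc]
    simp only [dif_pos (Finset.mem_range.mp hj)]
  -- combined weakly summable sequence
  set e : ℕ ≃ ℕ × ℕ := (Denumerable.eqv (ℕ × ℕ)).symm with he
  set c : ℕ → ℝ := fun i => ((2:ℝ) ^ i)⁻¹ with hc
  have hc0 : ∀ i, 0 < c i := fun i => by positivity
  have hc1 : ∀ i, c i ≤ 1 := fun i => by
    rw [hc]; exact inv_le_one_of_one_le₀ (one_le_pow₀ one_le_two)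
  set YS : ℕ × ℕ → StrongDual 𝕜 E := fun im => ((c im.1 : 𝕜)) • xs im.1 im.2 with hYS
  set ys : ℕ → StrongDual 𝕜 E := fun n => YS (e n) with hys
  have hYSnorm : ∀ im (y : E), ‖YS im y‖ ^ p = (c im.1) ^ p * ‖xs im.1 im.2 y‖ ^ p := by
    intro im y
    rw [hYS]
    simp only [ContinuousLinearMap.smul_apply, norm_smul, RCLike.norm_ofReal,
      abs_of_pos (hc0 im.1)]
    rw [Real.mul_rpow (hc0 im.1).le (norm_nonneg _)]
  have hcp_le : ∀ i, (c i) ^ p ≤ c i := fun i =>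
    calc (c i) ^ p ≤ (c i) ^ (1:ℝ) :=
          Real.rpow_le_rpow_of_exponent_ge (hc0 i) (hc1 i) hp
      _ = c i := Real.rpow_one _
  have hysW : WeaklySummable 𝕜 p ys := by
    intro Φ
    have key : Summable fun im : ℕ × ℕ => ‖Φ (YS im)‖ ^ p := by
      rw [summable_prod_of_nonneg (fun im => Real.rpow_nonneg (norm_nonneg _) p)]
      have hrow : ∀ i, ∀ m : ℕ, ‖Φ (YS (i, m))‖ ^ p = (c i) ^ p * ‖Φ (xs i m)‖ ^ p := by
        intro i m
        rw [hYS]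
        simp only [_root_.map_smul, norm_smul, RCLike.norm_ofReal, abs_of_pos (hc0 i)]
        rw [Real.mul_rpow (hc0 i).le (norm_nonneg _)]
      constructor
      · intro i
        have := (hxs1 i Φ).mul_left ((c i) ^ p)
        exact this.congr fun m => (hrow i m).symm
      · have hbound : ∀ i, (∑' m, ‖Φ (YS (i, m))‖ ^ p) ≤ (1/2) ^ i * ‖Φ‖ ^ p := by
          intro i
          calc (∑' m, ‖Φ (YS (i, m))‖ ^ p) = (c i) ^ p * ∑' m, ‖Φ (xs i m)‖ ^ p := by
                rw [← tsum_mul_left]; exact tsum_congr (hrow i)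
            _ ≤ (c i) ^ p * ‖Φ‖ ^ p := by
                exact mul_le_mul_of_nonneg_left (weak_tsum_le hp (hxs1 i) (hxs2 i) Φ)
                  (Real.rpow_nonneg (hc0 i).le p)
            _ ≤ (1/2) ^ i * ‖Φ‖ ^ p := by
                refine mul_le_mul_of_nonneg_right ?_ (Real.rpow_nonneg (norm_nonneg _) p)
                calc (c i) ^ p ≤ c i := hcp_le i
                  _ = (1/2) ^ i := by rw [hc, one_div, inv_pow]
        exact Summable.of_nonneg_of_le
          (fun i => tsum_nonneg fun m => Real.rpow_nonneg (norm_nonneg _) p)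
          hbound (summable_geometric_two.mul_right (‖Φ‖ ^ p))
    have heq2 : (fun n => ‖Φ (ys n)‖ ^ p) = (fun im => ‖Φ (YS im)‖ ^ p) ∘ e := rfl
    rw [heq2]
    exact (Equiv.summable_iff (f := fun im => ‖Φ (YS im)‖ ^ p) e).mpr key
  set B : ℕ → ℝ := fun j => (∑' n, ‖ys n (x j)‖ ^ p) ^ (q / p) with hBdef
  have hB : Summable B := hx ys hysW
  have hBnn : ∀ j, 0 ≤ B j := fun j =>
    Real.rpow_nonneg (tsum_nonneg fun n => Real.rpow_nonneg (norm_nonneg _) p) _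
  have hlow : ∀ i j, (c i) ^ q * (∑' n, ‖xs i n (x j)‖ ^ p) ^ (q / p) ≤ B j := by
    intro i j
    have htnn : (0:ℝ) ≤ ∑' n, ‖xs i n (x j)‖ ^ p :=
      tsum_nonneg fun n => Real.rpow_nonneg (norm_nonneg _) p
    have hinner : (c i) ^ p * ∑' n, ‖xs i n (x j)‖ ^ p ≤ ∑' n, ‖ys n (x j)‖ ^ p := by
      rw [← tsum_mul_left]
      have hinj : Injective (fun m : ℕ => e.symm (i, m)) := fun a b hab => by
        simpa using congrArg Prod.snd (e.symm.injective hab)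
      refine Summable.tsum_le_tsum_of_inj (fun m : ℕ => e.symm (i, m)) hinj
        (fun n _ => Real.rpow_nonneg (norm_nonneg _) p) (fun m => ?_)
        ((inner_summable (hxs1 i) (x j)).mul_left _)
        (inner_summable hysW (x j))
      have heq3 : ys (e.symm (i, m)) = YS (i, m) := by
        rw [hys]
        simp only [Equiv.apply_symm_apply]
      rw [heq3, hYSnorm (i, m) (x j)]
    have hpow : ((c i) ^ p) ^ (q / p) = (c i) ^ q := by
      rw [← Real.rpow_mul (hc0 i).le, mul_div_cancel₀ q hp0.ne']
    calc (c i) ^ q * (∑' n, ‖xs i n (x j)‖ ^ p) ^ (q / p)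
        = ((c i) ^ p * ∑' n, ‖xs i n (x j)‖ ^ p) ^ (q / p) := by
          rw [Real.mul_rpow (Real.rpow_nonneg (hc0 i).le p) htnn, hpow]
      _ ≤ (∑' n, ‖ys n (x j)‖ ^ p) ^ (q / p) := by
          apply Real.rpow_le_rpow (by positivity) hinner (by positivity)
  have hblock : ∀ i, ((2:ℝ) ^ i) ^ q < ∑ j ∈ Finset.range (k i), B j := by
    intro i
    have hcq : (0:ℝ) < (c i) ^ q := Real.rpow_pos_of_pos (hc0 i) q
    have h1 : (c i) ^ q * ((4:ℝ) ^ i) ^ q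
        < (c i) ^ q * ∑ j ∈ Finset.range (k i), (∑' n, ‖xs i n (x j)‖ ^ p) ^ (q / p) :=
      (mul_lt_mul_iff_right₀ hcq).mpr (hxs3' i)
    have h2 : (c i) ^ q * ((4:ℝ) ^ i) ^ q = ((2:ℝ) ^ i) ^ q := by
      rw [← Real.mul_rpow (hc0 i).le (by positivity)]
      congr 1
      rw [hc]
      rw [show (4:ℝ) = 2 * 2 by norm_num, mul_pow]
      field_simp
    have h3 : (c i) ^ q * ∑ j ∈ Finset.range (k i), (∑' n, ‖xs i n (x j)‖ ^ p) ^ (q / p)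
        ≤ ∑ j ∈ Finset.range (k i), B j := by
      rw [Finset.mul_sum]
      exact Finset.sum_le_sum fun j _ => hlow i j
    linarith
  have hub : ∀ i : ℕ, ((2:ℝ) ^ i) ^ q < ∑' j, B j := fun i =>
    lt_of_lt_of_le (hblock i) (Summable.sum_le_tsum _ (fun j _ => hBnn j) hB)
  obtain ⟨n, hn⟩ := exists_nat_gt (∑' j, B j)
  have h2n : (n:ℝ) < 2 ^ n := by exact_mod_cast Nat.lt_two_pow_self
  have h2q : ((2:ℝ) ^ n) ≤ ((2:ℝ) ^ n) ^ q := by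
    calc (2:ℝ) ^ n = ((2:ℝ) ^ n) ^ (1:ℝ) := (Real.rpow_one _).symm
      _ ≤ ((2:ℝ) ^ n) ^ q := Real.rpow_le_rpow_of_exponent_le (one_le_pow₀ one_le_two) hq
  have := hub n
  linarith


lemma fwd_dir [RCLike 𝕜] [NormedAddCommGroup E] [NormedSpace 𝕜 E]
    [NormedAddCommGroup F] [NormedSpace 𝕜 F]
    (p q r : ℝ) (hp : 1 ≤ p) (hq : 1 ≤ q) (hr : 1 ≤ r) (T : E →L[𝕜] F)
    (h : ∀ x : ℕ → E, MidSummable 𝕜 q p x → Summable fun j => ‖T (x j)‖ ^ r) :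
    ∃ A > 0, ∀ (k : ℕ) (x : Fin k → E),
        (∑ j, ‖T (x j)‖ ^ r) ^ (1 / r) ≤
          A * midNorm 𝕜 q p fun j => if h : j < k then x ⟨j, h⟩ else 0 := by
  have hp0 : (0:ℝ) < p := lt_of_lt_of_le one_pos hp
  have hq0 : (0:ℝ) < q := lt_of_lt_of_le one_pos hq
  have hr0 : (0:ℝ) < r := lt_of_lt_of_le one_pos hr
  by_contra hA
  push_neg at hA
  choose k xx hxx using fun i : ℕ => hA ((2:ℝ) ^ i) (by positivity)
  -- truncations, norms, scales
  set trunc : ℕ → ℕ → E := fun i j => if h : j < k i then xx i ⟨j, h⟩ else 0 with htrunc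
  have htrunc0 : ∀ i j, k i ≤ j → trunc i j = 0 := fun i j hj => dif_neg (not_lt.mpr hj)
  set L : ℕ → ℝ := fun i => (∑ j, ‖T (xx i j)‖ ^ r) ^ (1/r) with hL
  set m : ℕ → ℝ := fun i => midNorm 𝕜 q p (trunc i) with hm
  have hxx' : ∀ i, (2:ℝ) ^ i * m i < L i := fun i => hxx i
  have hm0 : ∀ i, 0 ≤ m i := fun i => midNorm_nonneg (trunc i)
  have hL0 : ∀ i, 0 < L i := fun i =>
    lt_of_le_of_lt (mul_nonneg (by positivity) (hm0 i)) (hxx' i)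
  set c : ℕ → ℝ := fun i => (L i)⁻¹ with hc
  have hc0 : ∀ i, 0 < c i := fun i => inv_pos.mpr (hL0 i)
  have hcm : ∀ i, c i * m i ≤ ((2:ℝ) ^ i)⁻¹ := by
    intro i
    rw [hc]
    have h1 : (2:ℝ) ^ i * m i * (L i)⁻¹ < 1 := by
      rw [mul_inv_lt_iff₀ (hL0 i), one_mul]; exact hxx' i
    have h2 : (0:ℝ) < (2:ℝ) ^ i := by positivity
    calc (L i)⁻¹ * m i = ((2:ℝ) ^ i)⁻¹ * ((2:ℝ) ^ i * m i * (L i)⁻¹) := by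
          field_simp
      _ ≤ ((2:ℝ) ^ i)⁻¹ * 1 := by
          exact mul_le_mul_of_nonneg_left h1.le (by positivity)
      _ = ((2:ℝ) ^ i)⁻¹ := mul_one _
  set e : ℕ ≃ ℕ × ℕ := (Denumerable.eqv (ℕ × ℕ)).symm with he
  set blockFun : ℕ × ℕ → E := fun im => ((c im.1 : 𝕜)) • trunc im.1 im.2 with hbf
  set x : ℕ → E := fun n => blockFun (e n) with hx
  -- x is mid (q,p)-summable
  have hmid : MidSummable 𝕜 q p x := by
    intro ys hys
    obtain ⟨C, hC0, hC⟩ := uniform_weak_bound hp ys hys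
    set d : ℝ := (C + 1) ^ (1/p : ℝ) with hd
    have hCpos : (0:ℝ) < C + 1 := by linarith
    have hd0 : 0 < d := Real.rpow_pos_of_pos hCpos _
    have hdp : d ^ p = C + 1 := by
      rw [hd, one_div, Real.rpow_inv_rpow hCpos.le hp0.ne']
    set zs : ℕ → StrongDual 𝕜 E := fun n => ((d⁻¹ : ℝ) : 𝕜) • ys n with hzs
    have hzsnorm : ∀ (Φ : StrongDual 𝕜 (StrongDual 𝕜 E)) n, ‖Φ (zs n)‖ ^ p = (d ^ p)⁻¹ * ‖Φ (ys n)‖ ^ p := by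
      intro Φ n
      rw [hzs]
      simp only [_root_.map_smul, norm_smul, RCLike.norm_ofReal, abs_of_pos (inv_pos.mpr hd0)]
      rw [Real.mul_rpow (inv_pos.mpr hd0).le (norm_nonneg _), ← Real.inv_rpow hd0.le]
    have hzsW : WeaklySummable 𝕜 p zs := by
      intro Φ
      exact ((hys Φ).mul_left ((d ^ p)⁻¹)).congr fun n => (hzsnorm Φ n).symm
    have hzs_le : ∀ Φ : StrongDual 𝕜 (StrongDual 𝕜 E), ∑' n, ‖Φ (zs n)‖ ^ p ≤ ‖Φ‖ ^ p := by
      intro Φ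
      have hnn : (0:ℝ) ≤ ‖Φ‖ ^ p := Real.rpow_nonneg (norm_nonneg Φ) p
      calc ∑' n, ‖Φ (zs n)‖ ^ p = (d ^ p)⁻¹ * ∑' n, ‖Φ (ys n)‖ ^ p := by
            rw [← tsum_mul_left]; exact tsum_congr (hzsnorm Φ)
        _ ≤ (d ^ p)⁻¹ * (C * ‖Φ‖ ^ p) := by
            exact mul_le_mul_of_nonneg_left (hC Φ) (by positivity)
        _ ≤ ‖Φ‖ ^ p := by
            rw [hdp, ← mul_assoc]
            have : (C + 1)⁻¹ * C ≤ 1 := by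
              rw [inv_mul_le_iff₀ hCpos]; linarith
            nlinarith
    have hzsN : weakNorm 𝕜 p zs ≤ 1 := by
      have hne : Nonempty {φ : StrongDual 𝕜 (StrongDual 𝕜 E) // ‖φ‖ ≤ 1} := ⟨⟨0, by simp [ContinuousLinearMap.opNorm_zero]⟩⟩
      refine ciSup_le fun φ => ?_
      calc (∑' n, ‖φ.1 (zs n)‖ ^ p) ^ (1/p : ℝ)
          ≤ (‖φ.1‖ ^ p) ^ (1/p : ℝ) := Real.rpow_le_rpow
            (tsum_nonneg fun n => Real.rpow_nonneg (norm_nonneg _) p) (hzs_le φ.1)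
            (by positivity)
        _ = ‖φ.1‖ := by rw [one_div, Real.rpow_rpow_inv (norm_nonneg _) hp0.ne']
        _ ≤ 1 := φ.2
    -- relate mid sums for ys and zs
    have hysum : ∀ y : E, ∑' n, ‖ys n y‖ ^ p = d ^ p * ∑' n, ‖zs n y‖ ^ p := by
      intro y
      rw [← tsum_mul_left]
      refine tsum_congr fun n => ?_
      have : ‖zs n y‖ ^ p = (d ^ p)⁻¹ * ‖ys n y‖ ^ p := by
        rw [hzs]
        simp only [ContinuousLinearMap.smul_apply, norm_smul, RCLike.norm_ofReal,
          abs_of_pos (inv_pos.mpr hd0)]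
        rw [Real.mul_rpow (inv_pos.mpr hd0).le (norm_nonneg _), ← Real.inv_rpow hd0.le]
      rw [this, ← mul_assoc, mul_inv_cancel₀ (by positivity : (d:ℝ) ^ p ≠ 0), one_mul]
    -- suffices to treat zs
    have hgoal : ∀ j, (∑' n, ‖ys n (x j)‖ ^ p) ^ (q/p)
        = d ^ q * (∑' n, ‖zs n (x j)‖ ^ p) ^ (q/p) := by
      intro j
      rw [hysum (x j), Real.mul_rpow (by positivity)
        (tsum_nonneg fun n => Real.rpow_nonneg (norm_nonneg _) p),
        ← Real.rpow_mul hd0.le, mul_div_cancel₀ q hp0.ne']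
    rw [show (fun j => (∑' n, ‖ys n (x j)‖ ^ p) ^ (q/p))
        = fun j => d ^ q * (∑' n, ‖zs n (x j)‖ ^ p) ^ (q/p) from funext hgoal]
    apply Summable.mul_left
    -- transfer to the product
    have hzterm : ∀ im : ℕ × ℕ, (∑' n, ‖zs n (blockFun im)‖ ^ p) ^ (q/p)
        = (c im.1) ^ q * (∑' n, ‖zs n (trunc im.1 im.2)‖ ^ p) ^ (q/p) := by
      intro im
      have h1 : ∀ n, ‖zs n (blockFun im)‖ ^ p = (c im.1) ^ p * ‖zs n (trunc im.1 im.2)‖ ^ p := by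
        intro n
        rw [hbf]
        simp only [_root_.map_smul, norm_smul, RCLike.norm_ofReal, abs_of_pos (hc0 im.1)]
        rw [Real.mul_rpow (hc0 im.1).le (norm_nonneg _)]
      rw [tsum_congr h1, tsum_mul_left,
        Real.mul_rpow (Real.rpow_nonneg (hc0 im.1).le p)
          (tsum_nonneg fun n => Real.rpow_nonneg (norm_nonneg _) p),
        ← Real.rpow_mul (hc0 im.1).le, mul_div_cancel₀ q hp0.ne']
    have hkey : Summable fun im : ℕ × ℕ => (∑' n, ‖zs n (blockFun im)‖ ^ p) ^ (q/p) := by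
      rw [summable_prod_of_nonneg (fun im => Real.rpow_nonneg
        (tsum_nonneg fun n => Real.rpow_nonneg (norm_nonneg _) p) _)]
      have hrow0 : ∀ i mm, k i ≤ mm → (∑' n, ‖zs n (blockFun (i, mm))‖ ^ p) ^ (q/p) = 0 := by
        intro i mm hmm
        have : blockFun (i, mm) = 0 := by
          rw [hbf]; simp only; rw [htrunc0 i mm hmm, smul_zero]
        rw [this]
        exact mid_term_zero hp0 hq0 zs
      constructor
      · intro i
        apply summable_of_ne_finset_zero (s := Finset.range (k i))
        intro mm hmm
        exact hrow0 i mm (by simpa using hmm)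
      · have hcol : ∀ i, ∑' mm, (∑' n, ‖zs n (blockFun (i, mm))‖ ^ p) ^ (q/p)
            ≤ (1/2 : ℝ) ^ i := by
          intro i
          have hts : ∑' mm, (∑' n, ‖zs n (blockFun (i, mm))‖ ^ p) ^ (q/p)
              = ∑ mm ∈ Finset.range (k i), (∑' n, ‖zs n (blockFun (i, mm))‖ ^ p) ^ (q/p) :=
            tsum_eq_sum fun mm hmm => hrow0 i mm (by simpa using hmm)
          rw [hts]
          calc ∑ mm ∈ Finset.range (k i), (∑' n, ‖zs n (blockFun (i, mm))‖ ^ p) ^ (q/p)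
              = (c i) ^ q * ∑ mm ∈ Finset.range (k i),
                  (∑' n, ‖zs n (trunc i mm)‖ ^ p) ^ (q/p) := by
                rw [Finset.mul_sum]
                exact Finset.sum_congr rfl fun mm _ => hzterm (i, mm)
            _ ≤ (c i) ^ q * (m i) ^ q := by
                apply mul_le_mul_of_nonneg_left
                  (mid_sum_le_midNorm_pow hp hq (htrunc0 i) hzsW hzsN)
                  (Real.rpow_nonneg (hc0 i).le q)
            _ = (c i * m i) ^ q := (Real.mul_rpow (hc0 i).le (hm0 i)).symm
            _ ≤ (((2:ℝ) ^ i)⁻¹) ^ q := Real.rpow_le_rpow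
                (mul_nonneg (hc0 i).le (hm0 i)) (hcm i) hq0.le
            _ ≤ ((2:ℝ) ^ i)⁻¹ := by
                calc (((2:ℝ) ^ i)⁻¹) ^ q ≤ (((2:ℝ) ^ i)⁻¹) ^ (1:ℝ) :=
                      Real.rpow_le_rpow_of_exponent_ge (by positivity)
                        (inv_le_one_of_one_le₀ (one_le_pow₀ one_le_two)) hq
                  _ = ((2:ℝ) ^ i)⁻¹ := Real.rpow_one _
            _ = (1/2 : ℝ) ^ i := by rw [one_div, inv_pow]
        exact Summable.of_nonneg_of_le
          (fun i => tsum_nonneg fun mm => Real.rpow_nonneg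
            (tsum_nonneg fun n => Real.rpow_nonneg (norm_nonneg _) p) _)
          hcol summable_geometric_two
    have heq2 : (fun j => (∑' n, ‖zs n (x j)‖ ^ p) ^ (q/p))
        = (fun im => (∑' n, ‖zs n (blockFun im)‖ ^ p) ^ (q/p)) ∘ e := rfl
    rw [heq2]
    exact (Equiv.summable_iff
      (f := fun im => (∑' n, ‖zs n (blockFun im)‖ ^ p) ^ (q/p)) e).mpr hkey
  -- Apply the hypothesis and derive a contradiction
  have hs := h x hmid
  have heq3 : (fun j => ‖T (x j)‖ ^ r) = (fun im => ‖T (blockFun im)‖ ^ r) ∘ e := rfl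
  rw [heq3] at hs
  have hG : Summable fun im : ℕ × ℕ => ‖T (blockFun im)‖ ^ r :=
    (Equiv.summable_iff (f := fun im => ‖T (blockFun im)‖ ^ r) e).mp hs
  have hfib := ((summable_prod_of_nonneg
    (fun im => Real.rpow_nonneg (norm_nonneg _) r)).mp hG).2
  have hone : ∀ i, ∑' mm, ‖T (blockFun (i, mm))‖ ^ r = 1 := by
    intro i
    have hz : ∀ mm, k i ≤ mm → ‖T (blockFun (i, mm))‖ ^ r = 0 := by
      intro mm hmm
      have : blockFun (i, mm) = 0 := by
        rw [hbf]; simp only; rw [htrunc0 i mm hmm, smul_zero]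
      rw [this, map_zero, norm_zero, Real.zero_rpow hr0.ne']
    have hts : ∑' mm, ‖T (blockFun (i, mm))‖ ^ r
        = ∑ mm ∈ Finset.range (k i), ‖T (blockFun (i, mm))‖ ^ r :=
      tsum_eq_sum fun mm hmm => hz mm (by simpa using hmm)
    rw [hts]
    have hterm : ∀ mm, ‖T (blockFun (i, mm))‖ ^ r = (c i) ^ r * ‖T (trunc i mm)‖ ^ r := by
      intro mm
      rw [hbf]
      simp only [_root_.map_smul, norm_smul, RCLike.norm_ofReal, abs_of_pos (hc0 i)]
      rw [Real.mul_rpow (hc0 i).le (norm_nonneg _)]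
    calc ∑ mm ∈ Finset.range (k i), ‖T (blockFun (i, mm))‖ ^ r
        = (c i) ^ r * ∑ mm ∈ Finset.range (k i), ‖T (trunc i mm)‖ ^ r := by
          rw [Finset.mul_sum]; exact Finset.sum_congr rfl fun mm _ => hterm mm
      _ = (c i) ^ r * ∑ j : Fin (k i), ‖T (xx i j)‖ ^ r := by
          congr 1
          rw [← Fin.sum_univ_eq_sum_range (fun mm => ‖T (trunc i mm)‖ ^ r) (k i)]
          refine Finset.sum_congr rfl fun j _ => ?_
          rw [htrunc]
          simp only [j.isLt, dif_pos, Fin.eta]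
      _ = 1 := by
          have hLr : L i ^ r = ∑ j : Fin (k i), ‖T (xx i j)‖ ^ r := by
            rw [hL, one_div, Real.rpow_inv_rpow
              (Finset.sum_nonneg fun j _ => Real.rpow_nonneg (norm_nonneg _) r) hr0.ne']
          rw [← hLr, hc, ← Real.mul_rpow (inv_pos.mpr (hL0 i)).le (hL0 i).le,
            inv_mul_cancel₀ (hL0 i).ne', Real.one_rpow]
  have : Summable fun _ : ℕ => (1:ℝ) := hfib.congr fun i => hone i
  have h10 : Tendsto (fun _ : ℕ => (1:ℝ)) atTop (𝓝 0) := this.tendsto_atTop_zero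
  have := tendsto_nhds_unique h10 tendsto_const_nhds
  norm_num at this



/-- for `q ≤ r`, `T` sends mid `(q,p)`-summable sequences to absolutely
`r`-summable sequences iff there is `A > 0` with
`(∑_{j=1}^k ‖T(x_j)‖^r)^{1/r} ≤ A ‖(x_1,…,x_k,0,0,…)‖_{q,p}` for all finite families. -/
theorem stmt14 [RCLike 𝕜] [NormedAddCommGroup E] [NormedSpace 𝕜 E] [CompleteSpace E]
    [NormedAddCommGroup F] [NormedSpace 𝕜 F] [CompleteSpace F]
    (p q r : ℝ) (hp : 1 ≤ p) (hq : 1 ≤ q) (hqr : q ≤ r) (T : E →L[𝕜] F) :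
    (∀ x : ℕ → E, MidSummable 𝕜 q p x → Summable fun j => ‖T (x j)‖ ^ r) ↔
      ∃ A > 0, ∀ (k : ℕ) (x : Fin k → E),
        (∑ j, ‖T (x j)‖ ^ r) ^ (1 / r) ≤
          A * midNorm 𝕜 q p fun j => if h : j < k then x ⟨j, h⟩ else 0 := by
  constructor
  · intro h
    exact fwd_dir p q r hp hq (hq.trans hqr) T h
  · rintro ⟨A, hA0, hA⟩ x hx
    exact rev_dir p q r hp hq (hq.trans hqr) T A hA0 hA x hx

end Main
end
end

section
/- Let E and F be Banach spaces, 1 ≤ p < ∞ and 1 ≤ r ≤ q < ∞, and T : E → F a bounded linear operator. Then (T(x_j))_{j=1}^∞ is mid (q,p)-summable in F for every weakly r-summable sequence (x_j)_{j=1}^∞ in E if and only if there is a constant B > 0 such that (∑_{j=1}^k (∑_{n=1}^∞ |y_n*(T(x_j))|^p)^{q/p})^{1/q} ≤ B · sup_{φ ∈ B_{E*}} (∑_{j=1}^k |φ(x_j)|^r)^{1/r} · ‖(y_n*)_{n=1}^∞‖_{w,p} for every k ∈ ℕ, all x_1,…,x_k ∈ E and every weakly p-summable sequence (y_n*)_{n=1}^∞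 in F*. -/
open NormedSpace MeasureTheory

noncomputable section

lemma weakly_summable_bound {𝕜 : Type*} [RCLike 𝕜] {V : Type*} [NormedAddCommGroup V]
    [NormedSpace 𝕜 V] {p : ℝ} (hp : 1 ≤ p) {x : ℕ → V} (hx : WeaklySummable 𝕜 p x) :
    ∃ C : ℝ, 0 ≤ C ∧ ∀ φ : StrongDual 𝕜 V, ∑' j, ‖φ (x j)‖ ^ p ≤ (C * ‖φ‖) ^ p := by
  have hp0 : (0:ℝ) < p := one_pos.trans_le hp
  haveI : Fact (1 ≤ ENNReal.ofReal p) := ⟨ENNReal.one_le_ofReal.2 hp⟩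
  set pe := ENNReal.ofReal p with hpe
  have hpt : pe.toReal = p := ENNReal.toReal_ofReal hp0.le
  have hnn : ∀ (φ : StrongDual 𝕜 V) (j : ℕ), 0 ≤ ‖φ (x j)‖ ^ p :=
    fun φ j => Real.rpow_nonneg (norm_nonneg _) _
  have hmem : ∀ (k : ℕ) (φ : StrongDual 𝕜 V),
      Memℓp (fun n => if n < k then φ (x n) else (0:𝕜)) pe := by
    intro k φ
    apply memℓp_gen
    apply summable_of_ne_finset_zero (s := Finset.range k)
    intro n hn
    simp only [Finset.mem_range, not_lt] at hn
    rw [if_neg (by omega), norm_zero, hpt, Real.zero_rpow hp0.ne']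
  -- norm of truncation
  have hnorm : ∀ (k : ℕ) (φ : StrongDual 𝕜 V),
      ‖(⟨fun n => if n < k then φ (x n) else 0, hmem k φ⟩ : lp (fun _ : ℕ => 𝕜) pe)‖
        = (∑ j ∈ Finset.range k, ‖φ (x j)‖ ^ p) ^ (1/p) := by
    intro k φ
    rw [lp.norm_eq_tsum_rpow (by rw [hpt]; exact hp0)]
    rw [hpt]
    congr 1
    rw [tsum_eq_sum (s := Finset.range k) (by
      intro n hn
      simp only [Finset.mem_range, not_lt] at hn
      show ‖if n < k then φ (x n) else (0:𝕜)‖ ^ p = 0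
      rw [if_neg (by omega), norm_zero, Real.zero_rpow hp0.ne'])]
    apply Finset.sum_congr rfl
    intro n hn
    simp only [Finset.mem_range] at hn
    show ‖if n < k then φ (x n) else (0:𝕜)‖ ^ p = _
    rw [if_pos hn]
  let g : ℕ → StrongDual 𝕜 V →L[𝕜] lp (fun _ : ℕ => 𝕜) pe := fun k =>
    LinearMap.mkContinuous
      { toFun := fun φ => ⟨fun n => if n < k then φ (x n) else 0, hmem k φ⟩
        map_add' := fun φ ψ => by
          apply lp.ext
          rw [lp.coeFn_add]
          funext n
          by_cases h : n < k <;> simp [h]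
        map_smul' := fun c φ => by
          apply lp.ext
          rw [lp.coeFn_smul]
          funext n
          by_cases h : n < k <;> simp [h] }
      ((∑ j ∈ Finset.range k, ‖x j‖ ^ p) ^ (1/p))
      (by
        intro φ
        simp only [LinearMap.coe_mk, AddHom.coe_mk]
        rw [hnorm k φ]
        have h1 : ∀ j ∈ Finset.range k, ‖φ (x j)‖ ^ p ≤ (‖φ‖ * ‖x j‖) ^ p := fun j _ =>
          Real.rpow_le_rpow (norm_nonneg _) (φ.le_opNorm (x j)) hp0.le
        calc (∑ j ∈ Finset.range k, ‖φ (x j)‖ ^ p) ^ (1/p)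
            ≤ (∑ j ∈ Finset.range k, (‖φ‖ * ‖x j‖) ^ p) ^ (1/p) :=
              Real.rpow_le_rpow (Finset.sum_nonneg fun j _ => hnn φ j)
                (Finset.sum_le_sum h1) (by positivity)
          _ = (‖φ‖ ^ p * ∑ j ∈ Finset.range k, ‖x j‖ ^ p) ^ (1/p) := by
              rw [Finset.mul_sum]
              congr 1
              exact Finset.sum_congr rfl fun j _ =>
                Real.mul_rpow (norm_nonneg _) (norm_nonneg _)
          _ = (∑ j ∈ Finset.range k, ‖x j‖ ^ p) ^ (1/p) * ‖φ‖ := by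
              rw [Real.mul_rpow (by positivity) (Finset.sum_nonneg fun j _ => by positivity),
                ← Real.rpow_mul (norm_nonneg _), mul_one_div_cancel hp0.ne',
                Real.rpow_one, mul_comm])
  have hg : ∀ (k : ℕ) (φ : StrongDual 𝕜 V),
      ‖g k φ‖ = (∑ j ∈ Finset.range k, ‖φ (x j)‖ ^ p) ^ (1/p) := fun k φ => hnorm k φ
  -- Banach–Steinhaus
  have hpb : ∀ φ : StrongDual 𝕜 V, ∃ C, ∀ k, ‖g k φ‖ ≤ C := by
    intro φ
    refine ⟨(∑' j, ‖φ (x j)‖ ^ p) ^ (1/p), fun k => ?_⟩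
    rw [hg k φ]
    exact Real.rpow_le_rpow (Finset.sum_nonneg fun j _ => hnn φ j)
      (Summable.sum_le_tsum _ (fun j _ => hnn φ j) (hx φ)) (by positivity)
  obtain ⟨C', hC'⟩ := banach_steinhaus hpb
  refine ⟨max C' 0, le_max_right _ _, fun φ => ?_⟩
  apply Real.tsum_le_of_sum_range_le (hnn φ)
  intro k
  have h1 : ‖g k φ‖ ≤ max C' 0 * ‖φ‖ :=
    ((g k).le_opNorm φ).trans
      (mul_le_mul_of_nonneg_right ((hC' k).trans (le_max_left _ _)) (norm_nonneg _))
  rw [hg k φ] at h1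
  have h2 := Real.rpow_le_rpow (by positivity) h1 hp0.le
  rwa [← Real.rpow_mul (Finset.sum_nonneg fun j _ => hnn φ j),
    one_div_mul_cancel hp0.ne', Real.rpow_one] at h2

lemma weakNorm_nonneg {𝕜 : Type*} [RCLike 𝕜] {V : Type*} [NormedAddCommGroup V]
    [NormedSpace 𝕜 V] (p : ℝ) (x : ℕ → V) : 0 ≤ weakNorm 𝕜 p x :=
  Real.iSup_nonneg fun φ => Real.rpow_nonneg
    (tsum_nonneg fun j => Real.rpow_nonneg (norm_nonneg _) _) _

lemma tsum_le_weakNorm {𝕜 : Type*} [RCLike 𝕜] {V : Type*} [NormedAddCommGroup V]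
    [NormedSpace 𝕜 V] {p : ℝ} (hp : 1 ≤ p) {x : ℕ → V} (hx : WeaklySummable 𝕜 p x)
    (φ : StrongDual 𝕜 V) :
    (∑' j, ‖φ (x j)‖ ^ p) ^ (1/p) ≤ weakNorm 𝕜 p x * ‖φ‖ := by
  have hp0 : (0:ℝ) < p := one_pos.trans_le hp
  have hnn : ∀ (ψ : StrongDual 𝕜 V) (j : ℕ), 0 ≤ ‖ψ (x j)‖ ^ p :=
    fun ψ j => Real.rpow_nonneg (norm_nonneg _) _
  obtain ⟨C, hC0, hC⟩ := weakly_summable_bound hp hx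
  have hball : ∀ ψ : StrongDual 𝕜 V, ‖ψ‖ ≤ 1 → (∑' j, ‖ψ (x j)‖ ^ p) ^ (1/p) ≤ C := by
    intro ψ hψ
    have h1 := Real.rpow_le_rpow (tsum_nonneg (hnn ψ)) (hC ψ) (by positivity : (0:ℝ) ≤ 1/p)
    rw [← Real.rpow_mul (by positivity), mul_one_div_cancel hp0.ne', Real.rpow_one] at h1
    exact h1.trans (by nlinarith [norm_nonneg ψ])
  have hbdd : BddAbove (Set.range fun ψ : {ψ : StrongDual 𝕜 V // ‖ψ‖ ≤ 1} =>
      (∑' j, ‖ψ.1 (x j)‖ ^ p) ^ (1/p)) := by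
    refine ⟨C, ?_⟩
    rintro - ⟨ψ, rfl⟩
    exact hball ψ.1 ψ.2
  by_cases hφ : φ = 0
  · subst hφ
    simp only [ContinuousLinearMap.zero_apply, norm_zero, Real.zero_rpow hp0.ne',
      tsum_zero, norm_zero, mul_zero]
    rw [Real.zero_rpow (by positivity : (1:ℝ)/p ≠ 0)]
  · have hφn : (0:ℝ) < ‖φ‖ := norm_pos_iff.2 hφ
    set ψ : StrongDual 𝕜 V := ((‖φ‖⁻¹ : ℝ) : 𝕜) • φ with hψdef
    have hψnorm : ‖ψ‖ = 1 := by
      rw [hψdef, norm_smul, RCLike.norm_ofReal, abs_of_nonneg (by positivity),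
        inv_mul_cancel₀ hφn.ne']
    have hψx : ∀ j, ‖φ (x j)‖ = ‖φ‖ * ‖ψ (x j)‖ := by
      intro j
      rw [hψdef]
      simp only [ContinuousLinearMap.smul_apply, norm_smul, RCLike.norm_ofReal,
        abs_of_nonneg (by positivity : (0:ℝ) ≤ ‖φ‖⁻¹)]
      rw [← mul_assoc, mul_inv_cancel₀ hφn.ne', one_mul]
    have h2 : (∑' j, ‖ψ (x j)‖ ^ p) ^ (1/p) ≤ weakNorm 𝕜 p x :=
      le_ciSup hbdd (⟨ψ, hψnorm.le⟩ : {ψ : StrongDual 𝕜 V // ‖ψ‖ ≤ 1})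
    have h3 : (∑' j, ‖φ (x j)‖ ^ p) = ‖φ‖ ^ p * ∑' j, ‖ψ (x j)‖ ^ p := by
      rw [← tsum_mul_left]
      exact tsum_congr fun j => by
        rw [hψx j, Real.mul_rpow hφn.le (norm_nonneg _)]
    rw [h3, Real.mul_rpow (by positivity) (tsum_nonneg (hnn ψ)),
      ← Real.rpow_mul hφn.le, mul_one_div_cancel hp0.ne', Real.rpow_one, mul_comm ‖φ‖]
    exact mul_le_mul_of_nonneg_right h2 hφn.le

lemma eq_zero_of_weakNorm_eq_zero {𝕜 : Type*} [RCLike 𝕜] {V : Type*} [NormedAddCommGroup V]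
    [NormedSpace 𝕜 V] {p : ℝ} (hp : 1 ≤ p) {x : ℕ → V} (hx : WeaklySummable 𝕜 p x)
    (h0 : weakNorm 𝕜 p x = 0) : ∀ n, x n = 0 := by
  have hp0 : (0:ℝ) < p := one_pos.trans_le hp
  intro n
  apply eq_zero_of_forall_dual_eq_zero 𝕜
  intro φ
  have h1 := tsum_le_weakNorm hp hx φ
  rw [h0, zero_mul] at h1
  have h2 : (∑' j, ‖φ (x j)‖ ^ p) = 0 := by
    have h3 : (0:ℝ) ≤ (∑' j, ‖φ (x j)‖ ^ p) :=
      tsum_nonneg fun j => Real.rpow_nonneg (norm_nonneg _) _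
    have h4 : (∑' j, ‖φ (x j)‖ ^ p) ^ (1/p) = 0 :=
      le_antisymm h1 (Real.rpow_nonneg h3 _)
    have h7 := congrArg (fun t : ℝ => t ^ p) h4
    simp only [← Real.rpow_mul h3, Real.zero_rpow hp0.ne'] at h7
    rwa [one_div_mul_cancel hp0.ne', Real.rpow_one] at h7
  have h5 : ‖φ (x n)‖ ^ p = 0 := by
    have hle := Summable.le_tsum (hx φ) n (fun j _ => Real.rpow_nonneg (norm_nonneg _) _)
    have hge : (0:ℝ) ≤ ‖φ (x n)‖ ^ p := Real.rpow_nonneg (norm_nonneg _) _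
    linarith [h2 ▸ hle]
  have h6 : ‖φ (x n)‖ = 0 := by
    by_contra h
    exact h ((Real.rpow_eq_zero (norm_nonneg _) hp0.ne').mp h5)
  simpa using h6

/-- Extension of a finite family by zeros, and transfer of the finite weak norm. -/
lemma finite_weak_facts {𝕜 : Type*} [RCLike 𝕜] {V : Type*} [NormedAddCommGroup V]
    [NormedSpace 𝕜 V] {s : ℝ} (hs : 1 ≤ s) {k : ℕ} (z : Fin k → V) :
    (∀ φ : StrongDual 𝕜 V, (∑ j, ‖φ (z j)‖ ^ s) ^ (1/s) ≤
      (⨆ ψ : {ψ : StrongDual 𝕜 V // ‖ψ‖ ≤ 1}, (∑ j, ‖ψ.1 (z j)‖ ^ s) ^ (1/s)) * ‖φ‖) ∧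
    ((⨆ ψ : {ψ : StrongDual 𝕜 V // ‖ψ‖ ≤ 1}, (∑ j, ‖ψ.1 (z j)‖ ^ s) ^ (1/s)) = 0 → ∀ j, z j = 0) := by
  have hs0 : (0:ℝ) < s := one_pos.trans_le hs
  set zext : ℕ → V := fun n => if h : n < k then z ⟨n, h⟩ else 0 with hzext
  have h1 : ∀ φ : StrongDual 𝕜 V, (∑' n, ‖φ (zext n)‖ ^ s) = ∑ j, ‖φ (z j)‖ ^ s := by
    intro φ
    rw [tsum_eq_sum (s := Finset.range k) (by
      intro n hn
      simp only [Finset.mem_range, not_lt] at hn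
      simp [hzext, dif_neg (by omega : ¬ n < k), Real.zero_rpow hs0.ne'])]
    rw [← Fin.sum_univ_eq_sum_range (fun n => ‖φ (zext n)‖ ^ s) k]
    exact Finset.sum_congr rfl fun j _ => by simp [hzext, j.isLt]
  have h2 : WeaklySummable 𝕜 s zext := by
    intro φ
    apply summable_of_ne_finset_zero (s := Finset.range k)
    intro n hn
    simp only [Finset.mem_range, not_lt] at hn
    simp [hzext, dif_neg (by omega : ¬ n < k), Real.zero_rpow hs0.ne']
  have h3 : weakNorm 𝕜 s zext =
      ⨆ ψ : {ψ : StrongDual 𝕜 V // ‖ψ‖ ≤ 1}, (∑ j, ‖ψ.1 (z j)‖ ^ s) ^ (1/s) := by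
    unfold weakNorm
    exact iSup_congr fun ψ => by rw [h1]
  constructor
  · intro φ
    have := tsum_le_weakNorm hs h2 φ
    rwa [h1, h3] at this
  · intro h0 j
    have := eq_zero_of_weakNorm_eq_zero hs h2 (by rw [h3, h0]) j
    simpa [hzext, j.isLt] using this



private lemma aux_pow_rpow {a : ℝ} (ha : 0 ≤ a) (s : ℝ) (m : ℕ) :
    (a ^ m) ^ s = (a ^ s) ^ m := by
  rw [← Real.rpow_natCast a m, ← Real.rpow_mul ha, mul_comm, Real.rpow_mul ha,
    Real.rpow_natCast]

private lemma geom_summable_aux {s : ℝ} (hs0 : 0 < s) {t : ℝ} (ht : 0 ≤ t) :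
    Summable fun m : ℕ => ((1/2:ℝ)^m * t) ^ s := by
  have h1 : ((1/2:ℝ) ^ s) < 1 := Real.rpow_lt_one (by norm_num) (by norm_num) hs0
  have h2 : (0:ℝ) ≤ (1/2:ℝ) ^ s := Real.rpow_nonneg (by norm_num) _
  refine ((summable_geometric_of_lt_one h2 h1).mul_left (t ^ s)).congr fun m => ?_
  rw [Real.mul_rpow (by positivity) ht, aux_pow_rpow (by norm_num) s m, mul_comm]

private lemma zext_tsum_eq {𝕜 : Type*} [RCLike 𝕜] {V : Type*} [NormedAddCommGroup V]
    [NormedSpace 𝕜 V] {s : ℝ} (hs0 : 0 < s) {k : ℕ} (z : Fin k → V) (φ : StrongDual 𝕜 V) :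
    ∑' j : ℕ, ‖φ (if h : j < k then z ⟨j, h⟩ else 0)‖ ^ s = ∑ j, ‖φ (z j)‖ ^ s := by
  rw [tsum_eq_sum (s := Finset.range k) (by
    intro n hn
    simp only [Finset.mem_range, not_lt] at hn
    simp [dif_neg (by omega : ¬ n < k), Real.zero_rpow hs0.ne'])]
  rw [← Fin.sum_univ_eq_sum_range (fun n => ‖φ (if h : n < k then z ⟨n, h⟩ else 0)‖ ^ s) k]
  exact Finset.sum_congr rfl fun j _ => by simp [j.isLt]

variable {𝕜 E F : Type*}

set_option maxHeartbeats 1600000 in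
/-- for `r ≤ q`, `T` sends weakly `r`-summable sequences to mid `(q,p)`-summable
sequences iff there is `B > 0` with
`(∑_{j=1}^k (∑_n |y_n^*(T x_j)|^p)^{q/p})^{1/q} ≤ B ‖(x_j)_{j=1}^k‖_{w,r} ‖(y_n^*)‖_{w,p}`
for all finite families in `E` and all weakly `p`-summable sequences in `F*`. -/
theorem stmt15 [RCLike 𝕜] [NormedAddCommGroup E] [NormedSpace 𝕜 E] [CompleteSpace E]
    [NormedAddCommGroup F] [NormedSpace 𝕜 F] [CompleteSpace F]
    (p q r : ℝ) (hp : 1 ≤ p) (hr : 1 ≤ r) (hrq : r ≤ q) (T : E →L[𝕜] F) :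
    (∀ x : ℕ → E, WeaklySummable 𝕜 r x → MidSummable 𝕜 q p fun j => T (x j)) ↔
      ∃ B > 0, ∀ (k : ℕ) (x : Fin k → E) (ys : ℕ → StrongDual 𝕜 F), WeaklySummable 𝕜 p ys →
        (∑ j, (∑' n, ‖ys n (T (x j))‖ ^ p) ^ (q / p)) ^ (1 / q) ≤
          B * (⨆ φ : {φ : StrongDual 𝕜 E // ‖φ‖ ≤ 1}, (∑ j, ‖φ.1 (x j)‖ ^ r) ^ (1 / r)) *
            weakNorm 𝕜 p ys := by
  have hr0 : (0:ℝ) < r := one_pos.trans_le hr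
  have hq1 : (1:ℝ) ≤ q := hr.trans hrq
  have hq0 : (0:ℝ) < q := one_pos.trans_le hq1
  have hp0 : (0:ℝ) < p := one_pos.trans_le hp
  have hqp0 : (0:ℝ) < q / p := div_pos hq0 hp0
  constructor
  · intro h
    by_contra hcon
    push_neg at hcon
    have H : ∀ m : ℕ, ∃ (k : ℕ) (z : Fin k → E) (w : ℕ → StrongDual 𝕜 F),
        WeaklySummable 𝕜 p w ∧
        (4:ℝ)^m * (⨆ φ : {φ : StrongDual 𝕜 E // ‖φ‖ ≤ 1}, (∑ j, ‖φ.1 (z j)‖ ^ r) ^ (1/r)) *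
            weakNorm 𝕜 p w
          < (∑ j, (∑' n, ‖w n (T (z j))‖ ^ p) ^ (q / p)) ^ (1 / q) := by
      intro m
      exact hcon ((4:ℝ)^m) (by positivity)
    choose k zm wm hws hfail using H
    set Wm : ℕ → ℝ := fun m => ⨆ φ : {φ : StrongDual 𝕜 E // ‖φ‖ ≤ 1},
      (∑ j, ‖φ.1 (zm m j)‖ ^ r) ^ (1/r) with hWm
    set Nm : ℕ → ℝ := fun m => weakNorm 𝕜 p (wm m) with hNm
    have hfail2 : ∀ m, (4:ℝ)^m * Wm m * Nm m
        < (∑ j, (∑' n, ‖wm m n (T (zm m j))‖ ^ p) ^ (q / p)) ^ (1 / q) :=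
      fun m => hfail m
    have hWnn : ∀ m, 0 ≤ Wm m := fun m => Real.iSup_nonneg fun φ =>
      Real.rpow_nonneg (Finset.sum_nonneg fun j _ => Real.rpow_nonneg (norm_nonneg _) _) _
    have hNnn : ∀ m, 0 ≤ Nm m := fun m => weakNorm_nonneg _ _
    have hS0nn : ∀ m (j : Fin (k m)), (0:ℝ) ≤ ∑' n, ‖wm m n (T (zm m j))‖ ^ p :=
      fun m j => tsum_nonneg fun n => Real.rpow_nonneg (norm_nonneg _) _
    have hLzero : ∀ m, (∀ (j : Fin (k m)) (n : ℕ), wm m n (T (zm m j)) = 0) →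
        (∑ j, (∑' n, ‖wm m n (T (zm m j))‖ ^ p) ^ (q / p)) ^ (1 / q) = 0 := by
      intro m hz
      have h1 : (∑ j, (∑' n, ‖wm m n (T (zm m j))‖ ^ p) ^ (q / p)) = 0 := by
        apply Finset.sum_eq_zero
        intro j _
        simp [hz j, Real.zero_rpow hp0.ne', Real.zero_rpow hqp0.ne']
      rw [h1, Real.zero_rpow (by positivity : (1:ℝ)/q ≠ 0)]
    have hWpos : ∀ m, 0 < Wm m := by
      intro m
      rcases (hWnn m).eq_or_lt with h0 | hlt
      · exfalso
        have h0' : Wm m = 0 := h0.symm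
        have hz0 : ∀ j, zm m j = 0 := (finite_weak_facts hr (zm m)).2 h0'
        have hL0 := hLzero m fun j n => by rw [hz0 j, map_zero, map_zero]
        have h2 := hfail2 m
        rw [hL0, h0', mul_zero, zero_mul] at h2
        exact lt_irrefl 0 h2
      · exact hlt
    have hNpos : ∀ m, 0 < Nm m := by
      intro m
      rcases (hNnn m).eq_or_lt with h0 | hlt
      · exfalso
        have h0' : Nm m = 0 := h0.symm
        have hz0 : ∀ n, wm m n = 0 := eq_zero_of_weakNorm_eq_zero hp (hws m) h0'
        have hL0 := hLzero m fun j n => by rw [hz0 n]; rfl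
        have h2 := hfail2 m
        rw [hL0, h0', mul_zero] at h2
        exact lt_irrefl 0 h2
      · exact hlt
    set cx : ℕ → ℝ := fun m => (1/2:ℝ)^m / Wm m with hcx
    set cy : ℕ → ℝ := fun m => (1/2:ℝ)^m / Nm m with hcy
    have hcxpos : ∀ m, 0 < cx m := fun m => div_pos (by positivity) (hWpos m)
    have hcypos : ∀ m, 0 < cy m := fun m => div_pos (by positivity) (hNpos m)
    have hcxW : ∀ m, cx m * Wm m = (1/2:ℝ)^m := fun m => div_mul_cancel₀ _ (hWpos m).ne'
    have hcyN : ∀ m, cy m * Nm m = (1/2:ℝ)^m := fun m => div_mul_cancel₀ _ (hNpos m).ne'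
    set zext : ℕ → ℕ → E := fun m j => if h : j < k m then zm m ⟨j, h⟩ else 0 with hzext
    set X : ℕ × ℕ → E := fun mj => ((cx mj.1 : ℝ) : 𝕜) • zext mj.1 mj.2 with hX
    set Ys : ℕ × ℕ → StrongDual 𝕜 F := fun mn => ((cy mn.1 : ℝ) : 𝕜) • wm mn.1 mn.2 with hYs
    set d : ℕ × ℕ ≃ ℕ := Denumerable.eqv (ℕ × ℕ) with hd
    set x : ℕ → E := fun n => X (d.symm n) with hxdef
    set ys : ℕ → StrongDual 𝕜 F := fun n => Ys (d.symm n) with hysdef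
    have hnormscal : ∀ t : ℝ, 0 ≤ t → ‖((t : ℝ) : 𝕜)‖ = t := fun t ht => by
      rw [RCLike.norm_ofReal, abs_of_nonneg ht]
    -- x is weakly r-summable
    have hxws : WeaklySummable 𝕜 r x := by
      intro φ
      have hF : Summable fun mj : ℕ × ℕ => ‖φ (X mj)‖ ^ r := by
        apply (summable_prod_of_nonneg
          (fun mj => Real.rpow_nonneg (norm_nonneg _) _)).2
        have e1 : ∀ m j, ‖φ (X (m, j))‖ ^ r = (cx m) ^ r * ‖φ (zext m j)‖ ^ r := by
          intro m j
          have e2 : ‖φ (X (m, j))‖ = cx m * ‖φ (zext m j)‖ := by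
            rw [hX]
            simp only []
            rw [_root_.map_smul, norm_smul, hnormscal _ (hcxpos m).le]
          rw [e2, Real.mul_rpow (hcxpos m).le (norm_nonneg _)]
        have hzsum : ∀ m, ∑' j, ‖φ (zext m j)‖ ^ r = ∑ j, ‖φ (zm m j)‖ ^ r := by
          intro m
          have := zext_tsum_eq (𝕜 := 𝕜) hr0 (zm m) φ
          simpa [hzext] using this
        constructor
        · intro m
          apply summable_of_ne_finset_zero (s := Finset.range (k m))
          intro j hj
          simp only [Finset.mem_range, not_lt] at hj
          have : zext m j = 0 := by simp [hzext, dif_neg (by omega : ¬ j < k m)]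
          rw [e1 m j, this]
          simp [Real.zero_rpow hr0.ne']
        · apply Summable.of_nonneg_of_le
            (fun m => tsum_nonneg fun j => Real.rpow_nonneg (norm_nonneg _) _)
            (fun m => ?_) (geom_summable_aux hr0 (norm_nonneg φ))
          have hzsum2 : ∑' j, ‖φ (X (m, j))‖ ^ r
              = (cx m) ^ r * ∑ j, ‖φ (zm m j)‖ ^ r := by
            rw [← hzsum m, ← tsum_mul_left]
            exact tsum_congr fun j => e1 m j
          rw [hzsum2]
          have hfin : (∑ j, ‖φ (zm m j)‖ ^ r) ≤ (Wm m * ‖φ‖) ^ r := by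
            have h1 : (∑ j, ‖φ (zm m j)‖ ^ r) ^ (1/r) ≤ Wm m * ‖φ‖ :=
              (finite_weak_facts hr (zm m)).1 φ
            have h2 := Real.rpow_le_rpow
              (Real.rpow_nonneg (Finset.sum_nonneg fun j _ =>
                Real.rpow_nonneg (norm_nonneg _) _) _) h1 hr0.le
            rwa [← Real.rpow_mul (Finset.sum_nonneg fun j _ =>
              Real.rpow_nonneg (norm_nonneg _) _), one_div_mul_cancel hr0.ne',
              Real.rpow_one] at h2
          calc (cx m) ^ r * (∑ j, ‖φ (zm m j)‖ ^ r)
              ≤ (cx m) ^ r * (Wm m * ‖φ‖) ^ r :=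
                mul_le_mul_of_nonneg_left hfin (Real.rpow_nonneg (hcxpos m).le _)
            _ = ((1/2:ℝ)^m * ‖φ‖) ^ r := by
                rw [← Real.mul_rpow (hcxpos m).le (mul_nonneg (hWnn m) (norm_nonneg _)),
                  ← mul_assoc, hcxW m]
      simp only [hxdef]
      exact (Equiv.summable_iff d.symm).2 hF
    -- ys is weakly p-summable
    have hysws : WeaklySummable 𝕜 p ys := by
      intro Ψ
      have hF : Summable fun mn : ℕ × ℕ => ‖Ψ (Ys mn)‖ ^ p := by
        apply (summable_prod_of_nonneg
          (fun mn => Real.rpow_nonneg (norm_nonneg _) _)).2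
        have e1 : ∀ m n, ‖Ψ (Ys (m, n))‖ ^ p = (cy m) ^ p * ‖Ψ (wm m n)‖ ^ p := by
          intro m n
          have e2 : ‖Ψ (Ys (m, n))‖ = cy m * ‖Ψ (wm m n)‖ := by
            rw [hYs]
            simp only []
            rw [_root_.map_smul, norm_smul, hnormscal _ (hcypos m).le]
          rw [e2, Real.mul_rpow (hcypos m).le (norm_nonneg _)]
        constructor
        · intro m
          exact ((hws m Ψ).mul_left ((cy m) ^ p)).congr fun n => (e1 m n).symm
        · apply Summable.of_nonneg_of_le
            (fun m => tsum_nonneg fun n => Real.rpow_nonneg (norm_nonneg _) _)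
            (fun m => ?_) (geom_summable_aux hp0 (norm_nonneg Ψ))
          have hzsum2 : ∑' n, ‖Ψ (Ys (m, n))‖ ^ p
              = (cy m) ^ p * ∑' n, ‖Ψ (wm m n)‖ ^ p := by
            rw [← tsum_mul_left]
            exact tsum_congr fun n => e1 m n
          rw [hzsum2]
          have hfin : (∑' n, ‖Ψ (wm m n)‖ ^ p) ≤ (Nm m * ‖Ψ‖) ^ p := by
            have h1 : (∑' n, ‖Ψ (wm m n)‖ ^ p) ^ (1/p) ≤ Nm m * ‖Ψ‖ :=
              tsum_le_weakNorm hp (hws m) Ψ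
            have h2 := Real.rpow_le_rpow
              (Real.rpow_nonneg (tsum_nonneg fun n =>
                Real.rpow_nonneg (norm_nonneg _) _) _) h1 hp0.le
            rwa [← Real.rpow_mul (tsum_nonneg fun n =>
              Real.rpow_nonneg (norm_nonneg _) _), one_div_mul_cancel hp0.ne',
              Real.rpow_one] at h2
          calc (cy m) ^ p * (∑' n, ‖Ψ (wm m n)‖ ^ p)
              ≤ (cy m) ^ p * (Nm m * ‖Ψ‖) ^ p :=
                mul_le_mul_of_nonneg_left hfin (Real.rpow_nonneg (hcypos m).le _)
            _ = ((1/2:ℝ)^m * ‖Ψ‖) ^ p := by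
                rw [← Real.mul_rpow (hcypos m).le (mul_nonneg (hNnn m) (norm_nonneg _)),
                  ← mul_assoc, hcyN m]
      simp only [hysdef]
      exact (Equiv.summable_iff d.symm).2 hF
    -- apply the hypothesis
    have hmid : Summable fun n => (∑' n', ‖ys n' (T (x n))‖ ^ p) ^ (q / p) :=
      h x hxws ys hysws
    set a : ℕ → ℝ := fun n => (∑' n', ‖ys n' (T (x n))‖ ^ p) ^ (q / p) with ha
    have hann : ∀ n, 0 ≤ a n := fun n => Real.rpow_nonneg
      (tsum_nonneg fun n' => Real.rpow_nonneg (norm_nonneg _) _) _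
    -- block lower bound
    have hblock : ∀ m, (1:ℝ) ≤ ∑ j ∈ Finset.range (k m), a (d (m, j)) := by
      intro m
      -- summability of the full inner series at each point
      have hinner : ∀ v : F, Summable fun n' => ‖ys n' v‖ ^ p := by
        intro v
        exact (hysws (inclusionInDoubleDual 𝕜 F v)).congr fun n' => by
          rw [dual_def]
      have hstep : ∀ j : Fin (k m),
          ((cx m * cy m) ^ q) * ((∑' n, ‖wm m n (T (zm m j))‖ ^ p) ^ (q / p))
            ≤ a (d (m, (j : ℕ))) := by
        intro j
        have hxval : x (d (m, (j : ℕ))) = ((cx m : ℝ) : 𝕜) • zm m j := by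
          rw [hxdef]
          simp only [hX, Equiv.symm_apply_apply]
          congr 1
          simp [hzext, j.isLt]
        have hblkterm : ∀ n : ℕ,
            ‖ys (d (m, n)) (T (x (d (m, (j : ℕ)))))‖ ^ p
              = (cx m * cy m) ^ p * ‖wm m n (T (zm m j))‖ ^ p := by
          intro n
          have hyval : ys (d (m, n)) = ((cy m : ℝ) : 𝕜) • wm m n := by
            rw [hysdef]
            simp only [hYs, Equiv.symm_apply_apply]
          rw [hxval, hyval]
          have heq : ‖(((cy m : ℝ) : 𝕜) • wm m n) (T (((cx m : ℝ) : 𝕜) • zm m j))‖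
              = (cx m * cy m) * ‖wm m n (T (zm m j))‖ := by
            simp only [ContinuousLinearMap.smul_apply, _root_.map_smul, smul_eq_mul, norm_mul]
            rw [hnormscal _ (hcypos m).le, hnormscal _ (hcxpos m).le]
            ring
          rw [heq, Real.mul_rpow (mul_nonneg (hcxpos m).le (hcypos m).le) (norm_nonneg _)]
        -- sub-sum inequality
        have hsub : (cx m * cy m) ^ p * (∑' n, ‖wm m n (T (zm m j))‖ ^ p)
            ≤ ∑' n', ‖ys n' (T (x (d (m, (j : ℕ)))))‖ ^ p := by
          rw [← tsum_mul_left]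
          apply Summable.tsum_le_tsum_of_inj (fun n => d (m, n))
            (fun n₁ n₂ h12 => by simpa using d.injective h12)
            (fun c _ => Real.rpow_nonneg (norm_nonneg _) _)
            (fun n => le_of_eq (hblkterm n).symm)
            (((hws m (inclusionInDoubleDual 𝕜 F (T (zm m j)))).congr (fun n => by
                rw [dual_def])).mul_left _)
            (hinner _)
        have hcc : (0:ℝ) ≤ cx m * cy m := mul_nonneg (hcxpos m).le (hcypos m).le
        have h3 := Real.rpow_le_rpow
          (mul_nonneg (Real.rpow_nonneg hcc _) (hS0nn m j)) hsub hqp0.le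
        rw [Real.mul_rpow (Real.rpow_nonneg hcc _) (hS0nn m j), ← Real.rpow_mul hcc,
          mul_div_cancel₀ q hp0.ne'] at h3
        exact h3
      have hsum : ((cx m * cy m) ^ q) * (∑ j, (∑' n, ‖wm m n (T (zm m j))‖ ^ p) ^ (q / p))
          ≤ ∑ j : Fin (k m), a (d (m, (j : ℕ))) := by
        rw [Finset.mul_sum]
        exact Finset.sum_le_sum fun j _ => hstep j
      have hLlow : ((4:ℝ)^m * Wm m * Nm m) ^ q
          ≤ ∑ j, (∑' n, ‖wm m n (T (zm m j))‖ ^ p) ^ (q / p) := by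
        have h1 := (hfail2 m).le
        have h2 := Real.rpow_le_rpow
          (mul_nonneg (mul_nonneg (by positivity) (hWnn m)) (hNnn m)) h1 hq0.le
        rwa [← Real.rpow_mul (Finset.sum_nonneg fun j _ =>
          Real.rpow_nonneg (hS0nn m j) _), one_div_mul_cancel hq0.ne',
          Real.rpow_one] at h2
      have hone : ((cx m * cy m) ^ q) * ((4:ℝ)^m * Wm m * Nm m) ^ q = 1 := by
        rw [← Real.mul_rpow (mul_nonneg (hcxpos m).le (hcypos m).le)
          (mul_nonneg (mul_nonneg (by positivity) (hWnn m)) (hNnn m))]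
        have : cx m * cy m * ((4:ℝ)^m * Wm m * Nm m)
            = (cx m * Wm m) * (cy m * Nm m) * 4^m := by ring
        rw [this, hcxW m, hcyN m]
        have h4 : ((1:ℝ)/2)^m * ((1/2:ℝ))^m * 4^m = 1 := by
          rw [← mul_pow, ← mul_pow]
          norm_num
        rw [h4, Real.one_rpow]
      calc (1:ℝ) = ((cx m * cy m) ^ q) * ((4:ℝ)^m * Wm m * Nm m) ^ q := hone.symm
        _ ≤ ((cx m * cy m) ^ q) *
            (∑ j, (∑' n, ‖wm m n (T (zm m j))‖ ^ p) ^ (q / p)) :=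
              mul_le_mul_of_nonneg_left hLlow
                (Real.rpow_nonneg (mul_nonneg (hcxpos m).le (hcypos m).le) _)
        _ ≤ ∑ j : Fin (k m), a (d (m, (j : ℕ))) := hsum
        _ = ∑ j ∈ Finset.range (k m), a (d (m, j)) :=
              Fin.sum_univ_eq_sum_range (fun j => a (d (m, j))) (k m)
    -- conclude
    have hA2 : Summable fun mj : ℕ × ℕ => a (d mj) := (Equiv.summable_iff d).2 hmid
    have hrows := (summable_prod_of_nonneg (fun mj => hann (d mj))).1 hA2
    have hge : ∀ NN : ℕ, (NN : ℝ) ≤ ∑' n, a n := by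
      intro NN
      have e0 : ∑' n, a n = ∑' mj : ℕ × ℕ, a (d mj) := (Equiv.tsum_eq d a).symm
      rw [e0, Summable.tsum_prod' hA2 hrows.1]
      have h1 : ∀ m, (1:ℝ) ≤ ∑' j, a (d (m, j)) := by
        intro m
        refine (hblock m).trans ?_
        exact Summable.sum_le_tsum _ (fun j _ => hann _) (hrows.1 m)
      calc (NN : ℝ) = ∑ m ∈ Finset.range NN, (1:ℝ) := by simp
        _ ≤ ∑ m ∈ Finset.range NN, ∑' j, a (d (m, j)) :=
            Finset.sum_le_sum fun m _ => h1 m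
        _ ≤ ∑' m, ∑' j, a (d (m, j)) :=
            Summable.sum_le_tsum _ (fun m _ => tsum_nonneg fun j => hann _) hrows.2
    obtain ⟨NN, hNN⟩ := exists_nat_gt (∑' n, a n)
    exact absurd (hge NN) (not_le.2 hNN)
  · rintro ⟨B, hB, hBineq⟩ x hx ys hys
    have hnn : ∀ j : ℕ, 0 ≤ (∑' n, ‖ys n (T (x j))‖ ^ p) ^ (q/p) := fun j =>
      Real.rpow_nonneg (tsum_nonneg fun n => Real.rpow_nonneg (norm_nonneg _) _) _
    set W := weakNorm 𝕜 r x with hWdef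
    set N := weakNorm 𝕜 p ys with hNdef
    have hW : 0 ≤ W := weakNorm_nonneg r x
    have hN : 0 ≤ N := weakNorm_nonneg p ys
    apply summable_of_sum_range_le (c := (B * W * N) ^ q) hnn
    intro K
    have hkey := hBineq K (fun j : Fin K => x j) ys hys
    have hsup : (⨆ φ : {φ : StrongDual 𝕜 E // ‖φ‖ ≤ 1},
        (∑ j : Fin K, ‖φ.1 (x j)‖ ^ r) ^ (1/r)) ≤ W := by
      haveI : Nonempty {φ : StrongDual 𝕜 E // ‖φ‖ ≤ 1} := ⟨⟨0, by simp⟩⟩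
      apply ciSup_le
      intro φ
      have h1 : (∑ j : Fin K, ‖φ.1 (x j)‖ ^ r) ≤ ∑' j, ‖φ.1 (x j)‖ ^ r := by
        rw [Fin.sum_univ_eq_sum_range (fun j => ‖φ.1 (x j)‖ ^ r) K]
        exact Summable.sum_le_tsum _ (fun j _ => Real.rpow_nonneg (norm_nonneg _) _) (hx φ.1)
      have h2 := Real.rpow_le_rpow
        (Finset.sum_nonneg fun j _ => Real.rpow_nonneg (norm_nonneg _) _) h1
        (by positivity : (0:ℝ) ≤ 1/r)
      refine h2.trans ((tsum_le_weakNorm hr hx φ.1).trans ?_)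
      calc W * ‖φ.1‖ ≤ W * 1 := mul_le_mul_of_nonneg_left φ.2 hW
        _ = W := mul_one W
    have hkey2 : (∑ j : Fin K, (∑' n, ‖ys n (T (x j))‖ ^ p) ^ (q/p)) ^ (1/q)
        ≤ B * W * N :=
      hkey.trans (mul_le_mul_of_nonneg_right
        (mul_le_mul_of_nonneg_left hsup hB.le) hN)
    have hsnn : (0:ℝ) ≤ ∑ j : Fin K, (∑' n, ‖ys n (T (x j))‖ ^ p) ^ (q/p) :=
      Finset.sum_nonneg fun j _ => hnn j
    have h3 := Real.rpow_le_rpow (Real.rpow_nonneg hsnn _) hkey2 hq0.le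
    rw [← Real.rpow_mul hsnn, one_div_mul_cancel hq0.ne', Real.rpow_one] at h3
    rw [← Fin.sum_univ_eq_sum_range (fun j => (∑' n, ‖ys n (T (x j))‖ ^ p) ^ (q/p)) K]
    exact h3
end
end
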